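/- Let F : ℝⁿ₊ → ℝⁿ be a P-function, i.e., for all distinct x, y in ℝⁿ₊ there exists i with (x_i − y_i)(F_i(x) − F_i(y)) > 0. Then the complementarity problem CP(F) — find x ≥ 0 with F(x) ≥ 0 and xᵀF(x) = 0 — has at most one solution. -/
import Mathlib

/-- If F is a P-function on ℝⁿ₊, then the complementarity
problem CP(F) has at most one solution. -/
theorem stmt_12 {n : ℕ} (F : (Fin n → ℝ) → (Fin n → ℝ))
    (hP : ∀ x y : Fin n → ℝ, (∀ i, 0 ≤ x i) → (∀ i, 0 ≤ y i) → x ≠ y →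
      ∃ i, (x i - y i) * (F x i - F y i) > 0) :
    ∀ x y : Fin n → ℝ,
      ((∀ i, 0 ≤ x i) ∧ (∀ i, 0 ≤ F x i) ∧ ∑ i, x i * F x i = 0) →
      ((∀ i, 0 ≤ y i) ∧ (∀ i, 0 ≤ F y i) ∧ ∑ i, y i * F y i = 0) →
      x = y := by
  intro x y ⟨hx, hFx, hsx⟩ ⟨hy, hFy, hsy⟩
  by_contra hne
  obtain ⟨i, hi⟩ := hP x y hx hy hne
  have hxz : ∀ j, x j * F x j = 0 := by
    intro j
    have := (Finset.sum_eq_zero_iff_of_nonneg (fun j _ =>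
      mul_nonneg (hx j) (hFx j))).mp hsx j (Finset.mem_univ j)
    exact this
  have hyz : ∀ j, y j * F y j = 0 := by
    intro j
    exact (Finset.sum_eq_zero_iff_of_nonneg (fun j _ =>
      mul_nonneg (hy j) (hFy j))).mp hsy j (Finset.mem_univ j)
  have h1 : 0 ≤ x i * F y i := mul_nonneg (hx i) (hFy i)
  have h2 : 0 ≤ y i * F x i := mul_nonneg (hy i) (hFx i)
  have : (x i - y i) * (F x i - F y i) = x i * F x i + y i * F y i - x i * F y i - y i * F x i := by ring
  rw [this, hxz i, hyz i] at hi
  linarith
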